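/- arXiv:2502.18203 — 2 statements merged into one kernel-verified Lean document; each statement's English description precedes it below -/
import Mathlib

section
/- N(Γ₁(5)) = 2: the set of cosets P·SL₂(ℤ) in SL₂(ℝ)/SL₂(ℤ) such that P⁻¹·A·P has integer entries for every A ∈ Γ₁(5) has exactly 2 elements. -/
open Matrix MatrixGroups CongruenceSubgroup

/-- A real 2×2 matrix has integer entries. -/
def IsIntegerMatrix (M : Matrix (Fin 2) (Fin 2) ℝ) : Prop :=
  ∀ i j, ∃ k : ℤ, M i j = (k : ℝ)

/-- The embedding `SL(2, ℤ) →* SL(2, ℝ)`. -/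
noncomputable def toSL2R : SL(2, ℤ) →* SL(2, ℝ) :=
  Matrix.SpecialLinearGroup.map (Int.castRingHom ℝ)

/-- `SL(2, ℤ)` as a subgroup of `SL(2, ℝ)`. -/
noncomputable def SL2ZinR : Subgroup SL(2, ℝ) := toSL2R.range

/-- The set of cosets `P·SL₂(ℤ)` in `SL₂(ℝ)/SL₂(ℤ)` such that `P⁻¹·A·P` has integer
entries for every `A ∈ G`; its cardinality is `N(G)`. -/
noncomputable def goodCosets (G : Subgroup SL(2, ℤ)) : Set (SL(2, ℝ) ⧸ SL2ZinR) :=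
  {x | ∃ P : SL(2, ℝ), x = QuotientGroup.mk P ∧ ∀ A ∈ G,
    IsIntegerMatrix ((P⁻¹ * toSL2R A * P : SL(2, ℝ)) : Matrix (Fin 2) (Fin 2) ℝ)}


/-- A rational real number whose square is an integer is an integer. -/
lemma int_of_rat_sq (x : ℝ) (a b c : ℤ) (hb : b ≠ 0) (hx : x * b = a)
    (hc : x * x = c) : ∃ k : ℤ, x = k := by
  have hbR : (b : ℝ) ≠ 0 := Int.cast_ne_zero.2 hb
  have hxq : x = ((a / b : ℚ) : ℝ) := by
    push_cast
    field_simp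
    linarith [hx]
  set q : ℚ := a / b with hq
  have h2 : (q * q : ℚ) = (c : ℚ) := by
    have : ((q * q : ℚ) : ℝ) = ((c : ℚ) : ℝ) := by
      push_cast
      rw [← hxq] at *
      push_cast at hc ⊢
      linarith [hc]
    exact_mod_cast this
  have hden : q.den * q.den = 1 := by
    have := Rat.mul_self_den q
    rw [h2] at this
    simpa using this.symm
  have hden1 : q.den = 1 := by
    have := Nat.eq_one_of_mul_eq_one_left hden
    omega
  refine ⟨q.num, ?_⟩
  rw [hxq]
  exact_mod_cast congrArg (fun t : ℚ => (t : ℝ)) ((Rat.den_eq_one_iff q).1 hden1).symm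

/-- A rational real number `x` with `5x²` an integer is an integer. -/
lemma int_of_rat_five_sq (x : ℝ) (a b c : ℤ) (hb : b ≠ 0) (hx : x * b = a)
    (hc : 5 * (x * x) = c) : ∃ k : ℤ, x = k := by
  obtain ⟨t, ht⟩ : ∃ t : ℤ, (5 : ℝ) * x = t := by
    refine int_of_rat_sq (5 * x) (5 * a) b (5 * c) hb (by push_cast; linarith) ?_
    push_cast
    nlinarith [hc]
  have h5 : (5 : ℤ) ∣ t * t := by
    have : ((t * t : ℤ) : ℝ) = ((5 * c : ℤ) : ℝ) := by
      push_cast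
      rw [← ht]
      linear_combination 5 * hc
    have h' : t * t = 5 * c := by exact_mod_cast this
    exact ⟨c, h'⟩
  have hp : Prime (5 : ℤ) := by norm_num
  have h5t : (5 : ℤ) ∣ t := by
    rcases hp.2.2 t t h5 with h | h <;> exact h
  obtain ⟨u, hu⟩ := h5t
  refine ⟨u, ?_⟩
  have : (5 : ℝ) * x = 5 * u := by rw [ht, hu]; push_cast; ring
  linarith


/-- Key arithmetic lemma: under the divisibility constraints, `n` is a square or
five times a square. -/
lemma nt_square_or_five_square (n c1 c2 c3 e1 e2 c34 : ℤ) (hn : 0 < n)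
    (h1 : n * c1 = 5 * e1 ^ 2) (h2 : n * c2 = 5 * e2 ^ 2) (h3 : n * c3 = c34 ^ 2)
    (hdet : n * e1 - e2 * c34 = n) : ∃ m : ℤ, n = m ^ 2 ∨ n = 5 * m ^ 2 := by
  by_cases hz : e2 = 0 ∨ c34 = 0
  · -- degenerate case: then e1 = 1 and n ∣ 5
    have he1 : e1 = 1 := by
      rcases hz with hz | hz
      · rw [hz] at hdet
        have : n * e1 = n * 1 := by linarith
        exact mul_left_cancel₀ (by omega) this
      · rw [hz] at hdet
        have : n * e1 = n * 1 := by linarith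
        exact mul_left_cancel₀ (by omega) this
    rw [he1] at h1
    have hdvd : n ∣ 5 := ⟨c1, by linarith⟩
    have hle : n ≤ 5 := Int.le_of_dvd (by norm_num) hdvd
    interval_cases n
    · exact ⟨1, Or.inl (by norm_num)⟩
    · exfalso; revert hdvd; decide
    · exfalso; revert hdvd; decide
    · exfalso; revert hdvd; decide
    · exact ⟨1, Or.inr (by norm_num)⟩
  push_neg at hz
  obtain ⟨he2, hc34⟩ := hz
  obtain ⟨a, b, hab, hsf⟩ := Nat.sq_mul_squarefree n.toNat
  have hnn : n.toNat ≠ 0 := by omega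
  have ha0 : a ≠ 0 := by rintro rfl; simp at hab; omega
  have hb0 : b ≠ 0 := by rintro rfl; simp at hab; omega
  have hcast : n = (b : ℤ) ^ 2 * (a : ℤ) := by
    have h' : ((b ^ 2 * a : ℕ) : ℤ) = (n.toNat : ℤ) := by rw [hab]
    push_cast at h'
    omega
  -- every prime divisor of `a` is 5
  have hkey : ∀ ℓ : ℕ, ℓ.Prime → ℓ ∣ a → ℓ = 5 := by
    intro ℓ hp hdvd
    by_contra hl5
    set t := b.factorization ℓ with ht
    have hfact : n.toNat.factorization ℓ = 2 * t + 1 := by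
      rw [← hab, Nat.factorization_mul (pow_ne_zero 2 hb0) ha0, Nat.factorization_pow]
      have h1' : a.factorization ℓ = 1 := by
        have hle := (Nat.squarefree_iff_factorization_le_one ha0).1 hsf ℓ
        have hge : 1 ≤ a.factorization ℓ :=
          (Nat.Prime.factorization_pos_of_dvd hp ha0 hdvd)
        omega
      simp [h1', ht]
      try ring
    have hdl : ℓ ^ (2 * t + 1) ∣ n.toNat := by
      rw [← hfact]; exact Nat.ordProj_dvd _ _
    have hdlZ : (ℓ : ℤ) ^ (2 * t + 1) ∣ n := by
      have := Int.natCast_dvd_natCast.2 hdl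
      push_cast at this
      rwa [Int.toNat_of_nonneg (by omega)] at this
    have hcop : Nat.Coprime ℓ 5 := (Nat.coprime_primes hp (by norm_num)).2 hl5
    -- ℓ^(t+1) ∣ e2
    have step : ∀ x : ℤ, x ≠ 0 → (ℓ : ℤ) ^ (2 * t + 1) ∣ x ^ 2 → (ℓ : ℤ) ^ (t + 1) ∣ x := by
      intro x hx hdvdx
      have hnat : ℓ ^ (2 * t + 1) ∣ x.natAbs ^ 2 := by
        have := Int.natAbs_dvd_natAbs.2 hdvdx
        simpa [Int.natAbs_pow] using this
      have hxnat : x.natAbs ≠ 0 := by simpa using hx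
      have hle : 2 * t + 1 ≤ (x.natAbs ^ 2).factorization ℓ :=
        (Nat.Prime.pow_dvd_iff_le_factorization hp (pow_ne_zero 2 hxnat)).1 hnat
      rw [Nat.factorization_pow] at hle
      have hle2 : t + 1 ≤ x.natAbs.factorization ℓ := by
        simp at hle; omega
      have := (Nat.Prime.pow_dvd_iff_le_factorization hp hxnat).2 hle2
      have h'' : ((ℓ ^ (t + 1) : ℕ) : ℤ) ∣ (x.natAbs : ℤ) := Int.natCast_dvd_natCast.2 this
      rw [Nat.cast_pow] at h''
      exact Int.dvd_natAbs.1 h''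
    have hde2 : (ℓ : ℤ) ^ (t + 1) ∣ e2 := by
      apply step e2 he2
      have hd5 : (ℓ : ℤ) ^ (2 * t + 1) ∣ 5 * e2 ^ 2 := h2 ▸ hdlZ.mul_right c2
      have hcop' : IsCoprime ((ℓ : ℤ) ^ (2 * t + 1)) (5 : ℤ) := by
        apply IsCoprime.pow_left
        exact_mod_cast (Nat.isCoprime_iff_coprime.2 hcop)
      exact hcop'.dvd_of_dvd_mul_left hd5
    have hdc34 : (ℓ : ℤ) ^ (t + 1) ∣ c34 := by
      apply step c34 hc34
      exact h3 ▸ hdlZ.mul_right c3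
    have hde1 : (ℓ : ℤ) ∣ e1 := by
      have hℓn : (ℓ : ℤ) ∣ n := dvd_trans (dvd_pow_self _ (by omega)) hdlZ
      have hd5 : (ℓ : ℤ) ∣ 5 * e1 ^ 2 := h1 ▸ hℓn.mul_right c1
      have hcop' : IsCoprime ((ℓ : ℤ)) (5 : ℤ) := by
        exact_mod_cast (Nat.isCoprime_iff_coprime.2 hcop)
      have := hcop'.dvd_of_dvd_mul_left hd5
      have hpZ : Prime (ℓ : ℤ) := Nat.prime_iff_prime_int.1 hp
      exact hpZ.dvd_of_dvd_pow this
    have hbig : (ℓ : ℤ) ^ (2 * t + 2) ∣ n := by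
      have h1' : (ℓ : ℤ) ^ (2 * t + 2) ∣ n * e1 := by
        have : (ℓ : ℤ) ^ (2 * t + 2) = (ℓ : ℤ) ^ (2 * t + 1) * ℓ := by ring
        rw [this]
        exact mul_dvd_mul hdlZ hde1
      have h2' : (ℓ : ℤ) ^ (2 * t + 2) ∣ e2 * c34 := by
        have : (ℓ : ℤ) ^ (2 * t + 2) = (ℓ : ℤ) ^ (t + 1) * (ℓ : ℤ) ^ (t + 1) := by ring
        rw [this]
        exact mul_dvd_mul hde2 hdc34
      have := dvd_sub h1' h2'
      rwa [hdet] at this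
    have hbigN : ℓ ^ (2 * t + 2) ∣ n.toNat := by
      have := Int.natAbs_dvd_natAbs.2 hbig
      have hna : n.natAbs = n.toNat := by omega
      simpa [Int.natAbs_pow, hna] using this
    have := (Nat.Prime.pow_dvd_iff_le_factorization hp hnn).1 hbigN
    omega
  -- hence a = 1 or a = 5
  have ha15 : a = 1 ∨ a = 5 := by
    by_cases ha1 : a = 1
    · exact Or.inl ha1
    have ha2 : 2 ≤ a := by omega
    have hmf := Nat.minFac_prime ha1
    have h5a : 5 ∣ a := by
      have := hkey a.minFac hmf (Nat.minFac_dvd a)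
      rw [← this]; exact Nat.minFac_dvd a
    obtain ⟨d, hd⟩ := h5a
    by_cases hd1 : d = 1
    · exact Or.inr (by omega)
    exfalso
    have hd0 : d ≠ 0 := by rintro rfl; omega
    have hmfd := Nat.minFac_prime hd1
    have h5d : d.minFac = 5 := hkey d.minFac hmfd (hd ▸ (Nat.minFac_dvd d).mul_left 5)
    have : 5 * 5 ∣ a := by
      rw [hd]
      exact mul_dvd_mul_left 5 (h5d ▸ Nat.minFac_dvd d)
    exact absurd (hsf 5 this) (by decide)
  rcases ha15 with rfl | rfl
  · exact ⟨(b : ℤ), Or.inl (by rw [hcast]; push_cast; ring)⟩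
  · exact ⟨(b : ℤ), Or.inr (by rw [hcast]; push_cast; ring)⟩

/-- Classification of the possible matrices `P`. -/
lemma classify (p q r s : ℝ) (hdet : p * s - q * r = 1)
    (c1 c2 c3 c4 c34 c14 c24 c13 : ℤ)
    (h1 : 5 * (p * p) = c1) (h2 : 5 * (q * q) = c2) (h3 : r * r = c3) (h4 : s * s = c4)
    (h34 : r * s = c34) (h14 : 5 * (p * s) = c14) (h24 : 5 * (q * s) = c24)
    (h13 : 5 * (p * r) = c13) :
    ((∃ k : ℤ, p = k) ∧ (∃ k : ℤ, q = k) ∧ (∃ k : ℤ, r = k) ∧ (∃ k : ℤ, s = k)) ∨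
    ((∃ k : ℤ, Real.sqrt 5 * p = k) ∧ (∃ k : ℤ, Real.sqrt 5 * q = k) ∧
      (∃ k : ℤ, r / Real.sqrt 5 = k) ∧ (∃ k : ℤ, s / Real.sqrt 5 = k)) := by
  have rt5_sq : Real.sqrt 5 * Real.sqrt 5 = 5 := Real.mul_self_sqrt (by norm_num)
  have rt5_pos : (0 : ℝ) < Real.sqrt 5 := Real.sqrt_pos.2 (by norm_num)
  have rt5_ne : Real.sqrt 5 ≠ 0 := ne_of_gt rt5_pos
  have hp5 : Prime (5 : ℤ) := by norm_num
  -- p*s, q*s, p*r are integers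
  have hdvd : ∀ x y : ℝ, ∀ cx cy cz : ℤ, 5 * (x * y) = cx → 5 * (x * x) = cy →
      y * y = cz → ∃ e : ℤ, x * y = e := by
    intro x y cx cy cz hx hy hz
    have hsq : cx ^ 2 = 5 * (cy * cz) := by
      have : ((cx ^ 2 : ℤ) : ℝ) = ((5 * (cy * cz) : ℤ) : ℝ) := by
        push_cast
        rw [← hx, ← hy, ← hz]
        ring
      exact_mod_cast this
    have h5cx : (5 : ℤ) ∣ cx := hp5.dvd_of_dvd_pow (n := 2) ⟨cy * cz, hsq⟩
    obtain ⟨e, he⟩ := h5cx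
    refine ⟨e, ?_⟩
    have h5 : (5 : ℝ) * (x * y) = 5 * e := by rw [hx, he]; push_cast; ring
    linarith
  obtain ⟨e1, he1⟩ : ∃ e : ℤ, p * s = e := hdvd p s c14 c1 c4 h14 h1 h4
  obtain ⟨e2, he2⟩ : ∃ e : ℤ, q * s = e := hdvd q s c24 c2 c4 h24 h2 h4
  obtain ⟨e3, he3⟩ : ∃ e : ℤ, p * r = e := hdvd p r c13 c1 c3 h13 h1 h3
  -- case split on s = 0
  by_cases hs : s = 0
  · -- s = 0 : then q * r = -1
    have hqr : q * r = -1 := by rw [hs] at hdet; linarith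
    have hr0 : r ≠ 0 := by intro h; rw [h] at hqr; simp at hqr
    have hc3pos : 0 < c3 := by
      have : (0:ℝ) < c3 := by rw [← h3]; exact mul_self_pos.2 hr0
      exact_mod_cast this
    have hprod : c3 * c2 = 5 := by
      have : ((c3 * c2 : ℤ) : ℝ) = ((5 : ℤ) : ℝ) := by
        push_cast
        rw [← h3, ← h2]
        nlinarith [hqr]
      exact_mod_cast this
    have hdvd5 : c3 ∣ 5 := ⟨c2, hprod.symm⟩
    have hle : c3 ≤ 5 := Int.le_of_dvd (by norm_num) hdvd5
    have h15 : c3 = 1 ∨ c3 = 5 := by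
      interval_cases c3 <;> revert hdvd5 <;> decide
    rcases h15 with h15 | h15
    · -- r² = 1 : integral case
      left
      subst h15
      have hr2 : r * r = 1 := by rw [h3]; norm_num
      rcases mul_self_eq_one_iff.1 hr2 with hr | hr <;> subst hr
      · exact ⟨⟨e3, by linarith [he3]⟩, ⟨-1, by push_cast; linarith [hqr]⟩,
          ⟨1, by norm_num⟩, ⟨0, by rw [hs]; norm_num⟩⟩
      · exact ⟨⟨-e3, by push_cast; linarith [he3]⟩, ⟨1, by push_cast; linarith [hqr]⟩,
          ⟨-1, by push_cast; norm_num⟩, ⟨0, by rw [hs]; norm_num⟩⟩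
    · -- r² = 5 : √5-case
      right
      subst h15
      have hr2 : r * r = Real.sqrt 5 * Real.sqrt 5 := by
        rw [h3, rt5_sq]; norm_num
      rcases mul_self_eq_mul_self_iff.1 hr2 with hr | hr <;> subst hr
      · refine ⟨⟨e3, by linear_combination he3⟩, ⟨-1, by push_cast; linear_combination hqr⟩,
          ⟨1, by push_cast; exact div_self rt5_ne⟩, ⟨0, by rw [hs]; simp⟩⟩
      · refine ⟨⟨-e3, by push_cast; linear_combination -he3⟩,
          ⟨1, by push_cast; linear_combination -hqr⟩,
          ⟨-1, by push_cast; rw [neg_div]; rw [div_self rt5_ne]⟩, ⟨0, by rw [hs]; simp⟩⟩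
  · -- s ≠ 0
    have hn : 0 < c4 := by
      have : (0:ℝ) < c4 := by rw [← h4]; exact mul_self_pos.2 hs
      exact_mod_cast this
    have H1 : c4 * c1 = 5 * e1 ^ 2 := by
      have : ((c4 * c1 : ℤ) : ℝ) = ((5 * e1 ^ 2 : ℤ) : ℝ) := by
        push_cast; rw [← h4, ← h1, ← he1]; ring
      exact_mod_cast this
    have H2 : c4 * c2 = 5 * e2 ^ 2 := by
      have : ((c4 * c2 : ℤ) : ℝ) = ((5 * e2 ^ 2 : ℤ) : ℝ) := by
        push_cast; rw [← h4, ← h2, ← he2]; ring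
      exact_mod_cast this
    have H3 : c4 * c3 = c34 ^ 2 := by
      have : ((c4 * c3 : ℤ) : ℝ) = ((c34 ^ 2 : ℤ) : ℝ) := by
        push_cast; rw [← h4, ← h3, ← h34]; ring
      exact_mod_cast this
    have Hdet : c4 * e1 - e2 * c34 = c4 := by
      have : ((c4 * e1 - e2 * c34 : ℤ) : ℝ) = ((c4 : ℤ) : ℝ) := by
        push_cast; rw [← h4, ← he1, ← he2, ← h34]; nlinarith [hdet]
      exact_mod_cast this
    obtain ⟨m, hm⟩ := nt_square_or_five_square c4 c1 c2 c3 e1 e2 c34 hn H1 H2 H3 Hdet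
    have hm0 : m ≠ 0 := by rintro rfl; rcases hm with h | h <;> omega
    rcases hm with hm | hm
    · -- c4 = m² : integral case
      left
      have hs2 : s * s = (m : ℝ) * m := by rw [h4, hm]; push_cast; ring
      rcases mul_self_eq_mul_self_iff.1 hs2 with hsv | hsv
      · refine ⟨int_of_rat_five_sq p e1 m c1 hm0 (by rw [← hsv]; exact he1) h1,
          int_of_rat_five_sq q e2 m c2 hm0 (by rw [← hsv]; exact he2) h2,
          int_of_rat_sq r c34 m c3 hm0 (by rw [← hsv]; exact h34) h3, ⟨m, hsv⟩⟩
      · refine ⟨int_of_rat_five_sq p (-e1) m c1 hm0 (by push_cast; rw [hsv] at he1; linear_combination -he1) h1,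
          int_of_rat_five_sq q (-e2) m c2 hm0 (by push_cast; rw [hsv] at he2; linear_combination -he2) h2,
          int_of_rat_sq r (-c34) m c3 hm0 (by push_cast; rw [hsv] at h34; linear_combination -h34) h3,
          ⟨-m, by push_cast; linarith [hsv]⟩⟩
    · -- c4 = 5 m² : √5 case
      right
      have key : ∀ x y : ℝ, (Real.sqrt 5 * x) * (y / Real.sqrt 5) = x * y := by
        intro x y; field_simp
      have hs5 : s * s = 5 * ((m:ℝ) * m) := by rw [h4, hm]; push_cast; ring
      have hσ2 : (s / Real.sqrt 5) * (s / Real.sqrt 5) = (m:ℝ) * m := by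
        rw [div_mul_div_comm, hs5, rt5_sq]
        exact mul_div_cancel_left₀ _ (by norm_num)
      have hkey1 : (Real.sqrt 5 * p) * (s / Real.sqrt 5) = e1 := by rw [key, he1]
      have hkey2 : (Real.sqrt 5 * q) * (s / Real.sqrt 5) = e2 := by rw [key, he2]
      have hkeysq1 : (Real.sqrt 5 * p) * (Real.sqrt 5 * p) = c1 := by
        rw [← h1]; linear_combination (p * p) * rt5_sq
      have hkeysq2 : (Real.sqrt 5 * q) * (Real.sqrt 5 * q) = c2 := by
        rw [← h2]; linear_combination (q * q) * rt5_sq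
      have hkey3 : (r / Real.sqrt 5) * (5 * (s / Real.sqrt 5)) = c34 := by
        rw [← h34]
        field_simp
        rw [Real.sq_sqrt (by norm_num : (0:ℝ) ≤ 5)]
      have hkeysq3 : 5 * ((r / Real.sqrt 5) * (r / Real.sqrt 5)) = c3 := by
        rw [← h3]
        field_simp
        rw [Real.sq_sqrt (by norm_num : (0:ℝ) ≤ 5)]
        ring
      rcases mul_self_eq_mul_self_iff.1 hσ2 with hσv | hσv
      · refine ⟨int_of_rat_sq _ e1 m c1 hm0 (by rw [hσv] at hkey1; exact hkey1) hkeysq1,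
          int_of_rat_sq _ e2 m c2 hm0 (by rw [hσv] at hkey2; exact hkey2) hkeysq2,
          int_of_rat_five_sq _ c34 (5 * m) c3 (by omega)
            (by push_cast; rw [hσv] at hkey3; linear_combination hkey3) hkeysq3,
          ⟨m, hσv⟩⟩
      · refine ⟨int_of_rat_sq _ (-e1) m c1 hm0 (by push_cast; rw [hσv] at hkey1; linear_combination -hkey1) hkeysq1,
          int_of_rat_sq _ (-e2) m c2 hm0 (by push_cast; rw [hσv] at hkey2; linear_combination -hkey2) hkeysq2,
          int_of_rat_five_sq _ (-c34) (5 * m) c3 (by omega)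
            (by push_cast; rw [hσv] at hkey3; linear_combination -hkey3) hkeysq3,
          ⟨-m, by push_cast; linarith [hσv]⟩⟩

/-- The matrix `diag(1/√5, √5)`. -/
noncomputable def Dl : SL(2, ℝ) :=
  ⟨!![(Real.sqrt 5)⁻¹, 0; 0, Real.sqrt 5], by
    rw [Matrix.det_fin_two_of]
    have : Real.sqrt 5 ≠ 0 := ne_of_gt (Real.sqrt_pos.2 (by norm_num))
    field_simp
    norm_num⟩

lemma Dl00 : Dl 0 0 = (Real.sqrt 5)⁻¹ := rfl
lemma Dl01 : Dl 0 1 = 0 := rfl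
lemma Dl10 : Dl 1 0 = 0 := rfl
lemma Dl11 : Dl 1 1 = Real.sqrt 5 := rfl

lemma toSL2R_apply (A : SL(2, ℤ)) (i j : Fin 2) :
    (toSL2R A : Matrix (Fin 2) (Fin 2) ℝ) i j = ((A i j : ℤ) : ℝ) := by
  simp [toSL2R]

lemma detP (P : SL(2, ℝ)) : P 0 0 * P 1 1 - P 0 1 * P 1 0 = 1 := by
  have := P.2
  rwa [Matrix.det_fin_two] at this

lemma detZ (M : SL(2, ℤ)) : M 0 0 * M 1 1 - M 0 1 * M 1 0 = 1 := by
  have := M.2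
  rwa [Matrix.det_fin_two] at this

/-- Explicit formula for conjugation in `SL(2, ℝ)`. -/
lemma conj_coe (P B : SL(2, ℝ)) :
    ((P⁻¹ * B * P : SL(2, ℝ)) : Matrix (Fin 2) (Fin 2) ℝ) =
    !![B 0 0 * (P 0 0 * P 1 1) + B 0 1 * (P 1 0 * P 1 1) - B 1 0 * (P 0 0 * P 0 1)
        - B 1 1 * (P 0 1 * P 1 0),
       B 0 0 * (P 0 1 * P 1 1) + B 0 1 * (P 1 1 * P 1 1) - B 1 0 * (P 0 1 * P 0 1)
        - B 1 1 * (P 0 1 * P 1 1);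
       -(B 0 0 * (P 0 0 * P 1 0)) - B 0 1 * (P 1 0 * P 1 0) + B 1 0 * (P 0 0 * P 0 0)
        + B 1 1 * (P 0 0 * P 1 0),
       -(B 0 0 * (P 0 1 * P 1 0)) - B 0 1 * (P 1 0 * P 1 1) + B 1 0 * (P 0 0 * P 0 1)
        + B 1 1 * (P 0 0 * P 1 1)] := by
  have hinv : ((P⁻¹ : SL(2, ℝ)) : Matrix (Fin 2) (Fin 2) ℝ) =
      !![P 1 1, -(P 0 1); -(P 1 0), P 0 0] := by
    rw [Matrix.SpecialLinearGroup.SL2_inv_expl]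
    rfl
  have : ((P⁻¹ * B * P : SL(2, ℝ)) : Matrix (Fin 2) (Fin 2) ℝ) =
      ((P⁻¹ : SL(2, ℝ)) : Matrix (Fin 2) (Fin 2) ℝ) * (B : Matrix (Fin 2) (Fin 2) ℝ)
        * (P : Matrix (Fin 2) (Fin 2) ℝ) := by
    simp
  rw [this, hinv]
  ext i j
  fin_cases i <;> fin_cases j <;>
    simp [Matrix.mul_apply, Matrix.vecMul, Matrix.vecHead, Matrix.vecTail,
      dotProduct, Fin.sum_univ_two] <;> ring

def T1 : SL(2, ℤ) := ⟨!![1, 1; 0, 1], by norm_num [Matrix.det_fin_two_of]⟩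
def T2 : SL(2, ℤ) := ⟨!![1, 0; 5, 1], by norm_num [Matrix.det_fin_two_of]⟩
def T3 : SL(2, ℤ) := ⟨!![6, 1; 5, 1], by norm_num [Matrix.det_fin_two_of]⟩
def T4 : SL(2, ℤ) := ⟨!![1, 1; 5, 6], by norm_num [Matrix.det_fin_two_of]⟩

lemma T1mem : T1 ∈ Gamma1 5 := by rw [Gamma1_mem]; refine ⟨?_, ?_, ?_⟩ <;> decide
lemma T2mem : T2 ∈ Gamma1 5 := by rw [Gamma1_mem]; refine ⟨?_, ?_, ?_⟩ <;> decide
lemma T3mem : T3 ∈ Gamma1 5 := by rw [Gamma1_mem]; refine ⟨?_, ?_, ?_⟩ <;> decide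
lemma T4mem : T4 ∈ Gamma1 5 := by rw [Gamma1_mem]; refine ⟨?_, ?_, ?_⟩ <;> decide

lemma one_mem_goodCosets :
    (QuotientGroup.mk (1 : SL(2, ℝ)) : SL(2, ℝ) ⧸ SL2ZinR) ∈ goodCosets (Gamma1 5) := by
  refine ⟨1, rfl, ?_⟩
  intro A _ i j
  refine ⟨A i j, ?_⟩
  rw [show (1 : SL(2, ℝ))⁻¹ * toSL2R A * 1 = toSL2R A by group]
  exact toSL2R_apply A i j

lemma Dl_mem_goodCosets :
    (QuotientGroup.mk Dl : SL(2, ℝ) ⧸ SL2ZinR) ∈ goodCosets (Gamma1 5) := by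
  have rt5_sq : Real.sqrt 5 * Real.sqrt 5 = 5 := Real.mul_self_sqrt (by norm_num)
  have rt5_ne : Real.sqrt 5 ≠ 0 := ne_of_gt (Real.sqrt_pos.2 (by norm_num))
  have hinv5 : (Real.sqrt 5)⁻¹ * Real.sqrt 5 = 1 := inv_mul_cancel₀ rt5_ne
  have hii : (Real.sqrt 5)⁻¹ * (Real.sqrt 5)⁻¹ = (5:ℝ)⁻¹ := by rw [← mul_inv, rt5_sq]
  refine ⟨Dl, rfl, ?_⟩
  intro A hA
  obtain ⟨c', hc'⟩ : (5 : ℤ) ∣ A 1 0 :=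
    (ZMod.intCast_zmod_eq_zero_iff_dvd _ 5).1 ((Gamma1_mem 5 A).1 hA).2.2
  intro i j
  rw [conj_coe]
  fin_cases i <;> fin_cases j <;>
    simp only [Dl00, Dl01, Dl10, Dl11, toSL2R_apply, Fin.zero_eta, Fin.mk_one,
      Matrix.cons_val', Matrix.cons_val_zero, Matrix.cons_val_one, Matrix.head_cons,
      Matrix.head_fin_const, Matrix.empty_val', Matrix.cons_val_fin_one, Matrix.of_apply]
  · exact ⟨A 0 0, by push_cast; linear_combination ((A 0 0 : ℤ) : ℝ) * hinv5⟩
  · exact ⟨5 * A 0 1, by push_cast; linear_combination ((A 0 1 : ℤ) : ℝ) * rt5_sq⟩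
  · exact ⟨c', by rw [hc']; push_cast; linear_combination (5 * (c' : ℝ)) * hii⟩
  · exact ⟨A 1 1, by push_cast; linear_combination ((A 1 1 : ℤ) : ℝ) * hinv5⟩

lemma goodCosets_eq :
    goodCosets (Gamma1 5) =
      {QuotientGroup.mk (1 : SL(2, ℝ)), (QuotientGroup.mk Dl : SL(2, ℝ) ⧸ SL2ZinR)} := by
  have rt5_sq : Real.sqrt 5 * Real.sqrt 5 = 5 := Real.mul_self_sqrt (by norm_num)
  have rt5_ne : Real.sqrt 5 ≠ 0 := ne_of_gt (Real.sqrt_pos.2 (by norm_num))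
  apply Set.eq_of_subset_of_subset
  · rintro x ⟨P, rfl, H⟩
    have hdet := detP P
    obtain ⟨c4, hc4'⟩ := H T1 T1mem 0 1
    obtain ⟨c3', hc3'⟩ := H T1 T1mem 1 0
    obtain ⟨c34', hc34'⟩ := H T1 T1mem 0 0
    obtain ⟨c2', hc2'⟩ := H T2 T2mem 0 1
    obtain ⟨c1, hc1'⟩ := H T2 T2mem 1 0
    obtain ⟨c12', hc12'⟩ := H T2 T2mem 0 0
    obtain ⟨c14', hc14'⟩ := H T3 T3mem 0 0
    obtain ⟨c13', hc13'⟩ := H T3 T3mem 1 0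
    obtain ⟨c24', hc24'⟩ := H T4 T4mem 0 1
    rw [conj_coe] at hc4' hc3' hc34' hc2' hc1' hc12' hc14' hc13' hc24'
    simp only [toSL2R_apply, Matrix.of_apply, Matrix.cons_val', Matrix.cons_val_zero,
      Matrix.cons_val_one, Matrix.head_cons, Matrix.cons_val_fin_one, Matrix.empty_val']
      at hc4' hc3' hc34' hc2' hc1' hc12' hc14' hc13' hc24'
    simp only [toSL2R_apply, T1, T2, T3, T4, Matrix.SpecialLinearGroup.coe_mk,
      Matrix.cons_val', Matrix.cons_val_zero, Matrix.cons_val_one, Matrix.head_cons,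
      Matrix.head_fin_const, Matrix.empty_val', Matrix.cons_val_fin_one, Matrix.of_apply,
      Int.cast_one, Int.cast_zero, Int.cast_ofNat, Fin.isValue]
      at hc4' hc3' hc34' hc2' hc1' hc12' hc14' hc13' hc24'
    push_cast at hc4' hc3' hc34' hc2' hc1' hc12' hc14' hc13' hc24'
    have H4 : P 1 1 * P 1 1 = (c4 : ℝ) := by linear_combination hc4'
    have H3 : P 1 0 * P 1 0 = -(c3' : ℝ) := by linear_combination -hc3'
    have H34 : P 1 0 * P 1 1 = (c34' : ℝ) - 1 := by linear_combination hc34' - hdet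
    have H2 : 5 * (P 0 1 * P 0 1) = -(c2' : ℝ) := by linear_combination -hc2'
    have H1 : 5 * (P 0 0 * P 0 0) = (c1 : ℝ) := by linear_combination hc1'
    have H12 : 5 * (P 0 0 * P 0 1) = 1 - (c12' : ℝ) := by linear_combination hdet - hc12'
    have H14 : 5 * (P 0 0 * P 1 1) = (c14' : ℝ) - (c34' : ℝ) - (c12' : ℝ) + 1 := by
      linear_combination hc14' - H34 + H12 - hdet
    have H13 : 5 * (P 0 0 * P 1 0) = (c1 : ℝ) + (c3' : ℝ) - (c13' : ℝ) := by
      linear_combination -hc13' - H3 + H1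
    have H24 : 5 * (P 0 1 * P 1 1) = (c4 : ℝ) + (c2' : ℝ) - (c24' : ℝ) := by
      linear_combination -hc24' + H4 - H2
    rcases classify (P 0 0) (P 0 1) (P 1 0) (P 1 1) hdet c1 (-c2') (-c3') c4 (c34' - 1)
        (c14' - c34' - c12' + 1) (c4 + c2' - c24') (c1 + c3' - c13')
        (by push_cast; linear_combination H1) (by push_cast; linear_combination H2)
        (by push_cast; linear_combination H3) (by push_cast; linear_combination H4)
        (by push_cast; linear_combination H34) (by push_cast; linear_combination H14)
        (by push_cast; linear_combination H24) (by push_cast; linear_combination H13) with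
      ⟨⟨k1, hk1⟩, ⟨k2, hk2⟩, ⟨k3, hk3⟩, ⟨k4, hk4⟩⟩ | ⟨⟨k1, hk1⟩, ⟨k2, hk2⟩, ⟨k3, hk3⟩, ⟨k4, hk4⟩⟩
    · -- integral case : x = mk 1
      left
      show QuotientGroup.mk P = (QuotientGroup.mk 1 : SL(2, ℝ) ⧸ SL2ZinR)
      rw [QuotientGroup.eq, mul_one]
      apply Subgroup.inv_mem
      have hMdet : k1 * k4 - k2 * k3 = 1 := by
        have : ((k1 * k4 - k2 * k3 : ℤ) : ℝ) = 1 := by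
          push_cast
          rw [← hk1, ← hk2, ← hk3, ← hk4]
          exact hdet
        exact_mod_cast this
      refine ⟨⟨!![k1, k2; k3, k4], by rw [Matrix.det_fin_two_of]; linarith⟩, ?_⟩
      ext i j
      fin_cases i <;> fin_cases j <;>
        simp only [toSL2R_apply, Matrix.SpecialLinearGroup.coe_mk, Matrix.cons_val',
          Matrix.cons_val_zero, Matrix.cons_val_one, Matrix.head_cons, Matrix.head_fin_const,
          Matrix.empty_val', Matrix.cons_val_fin_one, Matrix.of_apply, Fin.isValue]
      · exact hk1.symm
      · exact hk2.symm
      · exact hk3.symm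
      · exact hk4.symm
    · -- √5 case : x = mk Dl
      right
      show QuotientGroup.mk P = (QuotientGroup.mk Dl : SL(2, ℝ) ⧸ SL2ZinR)
      rw [QuotientGroup.eq]
      have hMdet : k1 * k4 - k2 * k3 = 1 := by
        have : ((k1 * k4 - k2 * k3 : ℤ) : ℝ) = 1 := by
          push_cast
          rw [← hk1, ← hk2, ← hk3, ← hk4]
          field_simp
          linear_combination hdet
        exact_mod_cast this
      have hDP : Dl⁻¹ * P = toSL2R ⟨!![k1, k2; k3, k4],
          by rw [Matrix.det_fin_two_of]; linarith⟩ := by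
        have hDlinv : ((Dl⁻¹ : SL(2, ℝ)) : Matrix (Fin 2) (Fin 2) ℝ) =
            !![Real.sqrt 5, 0; 0, (Real.sqrt 5)⁻¹] := by
          rw [Matrix.SpecialLinearGroup.SL2_inv_expl]
          norm_num [Dl00, Dl01, Dl10, Dl11]
          rfl
        have hcoe : ((Dl⁻¹ * P : SL(2, ℝ)) : Matrix (Fin 2) (Fin 2) ℝ) =
            ((Dl⁻¹ : SL(2, ℝ)) : Matrix (Fin 2) (Fin 2) ℝ) * (P : Matrix (Fin 2) (Fin 2) ℝ) := by
          simp
        ext i j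
        rw [hcoe, hDlinv]
        erw [toSL2R_apply]
        fin_cases i <;> fin_cases j <;>
          simp [toSL2R_apply, Matrix.mul_apply, Matrix.vecMul, Matrix.vecHead,
            Matrix.vecTail, dotProduct, Fin.sum_univ_two] <;>
          first
            | linear_combination hk1
            | linear_combination hk2
            | linear_combination hk3
            | linear_combination hk4
      have hmem : Dl⁻¹ * P ∈ SL2ZinR := ⟨_, hDP.symm⟩
      have := SL2ZinR.inv_mem hmem
      rwa [_root_.mul_inv_rev, inv_inv] at this
  · rintro x (rfl | rfl)
    · exact one_mem_goodCosets
    · exact Dl_mem_goodCosets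

lemma one_ne_Dl :
    (QuotientGroup.mk (1 : SL(2, ℝ)) : SL(2, ℝ) ⧸ SL2ZinR) ≠ QuotientGroup.mk Dl := by
  have rt5_sq : Real.sqrt 5 * Real.sqrt 5 = 5 := Real.mul_self_sqrt (by norm_num)
  intro h
  rw [QuotientGroup.eq, inv_one, one_mul] at h
  obtain ⟨M, hM⟩ := h
  have h11 : ((M 1 1 : ℤ) : ℝ) = Real.sqrt 5 := by
    have := congrArg (fun N : SL(2, ℝ) => (N : Matrix (Fin 2) (Fin 2) ℝ) 1 1) hM
    simpa [toSL2R_apply, Dl11] using this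
  have hsq : ((M 1 1 * M 1 1 : ℤ) : ℝ) = ((5 : ℤ) : ℝ) := by
    push_cast
    rw [h11, rt5_sq]
  have h5 : (M 1 1) * (M 1 1) = 5 := by exact_mod_cast hsq
  have hp : Prime (5 : ℤ) := by norm_num
  have hdvd : (5 : ℤ) ∣ M 1 1 := by
    rcases hp.2.2 _ _ ⟨1, by linarith⟩ with hh | hh <;> exact hh
  obtain ⟨u, hu⟩ := hdvd
  have h25 : 25 * (u * u) = 5 := by linear_combination h5 - ((M 1 1 : ℤ) + 5 * u) * hu
  have h1 : 5 * (u * u) = 1 := by linarith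
  have : (5 : ℤ) ∣ 1 := ⟨u * u, h1.symm⟩
  norm_num at this

/-- `N(Γ₁(5)) = 2`. -/
theorem stmt_17 : (goodCosets (Gamma1 5)).ncard = 2 := by
  rw [goodCosets_eq]
  exact Set.ncard_pair one_ne_Dl
end

section
/- N(Γ₀(8)) = 6: the set of cosets P·SL₂(ℤ) in SL₂(ℝ)/SL₂(ℤ) such that P⁻¹·A·P has integer entries for every A ∈ Γ₀(8) has exactly 6 elements. -/
open Matrix MatrixGroups CongruenceSubgroup

namespace Stmt18Aux

/-- `x` is an integer. -/
def IsInt (x : ℝ) : Prop := ∃ k : ℤ, x = (k : ℝ)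

lemma IsInt.add {x y : ℝ} (hx : IsInt x) (hy : IsInt y) : IsInt (x + y) := by
  obtain ⟨k, rfl⟩ := hx; obtain ⟨l, rfl⟩ := hy; exact ⟨k + l, by push_cast; ring⟩

lemma IsInt.sub {x y : ℝ} (hx : IsInt x) (hy : IsInt y) : IsInt (x - y) := by
  obtain ⟨k, rfl⟩ := hx; obtain ⟨l, rfl⟩ := hy; exact ⟨k - l, by push_cast; ring⟩

lemma IsInt.mul {x y : ℝ} (hx : IsInt x) (hy : IsInt y) : IsInt (x * y) := by
  obtain ⟨k, rfl⟩ := hx; obtain ⟨l, rfl⟩ := hy; exact ⟨k * l, by push_cast; ring⟩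

lemma IsInt.intCast (k : ℤ) : IsInt (k : ℝ) := ⟨k, rfl⟩

lemma IsInt.one : IsInt (1 : ℝ) := ⟨1, by norm_num⟩

lemma IsInt.congr {x y : ℝ} (hx : IsInt x) (h : x = y) : IsInt y := h ▸ hx

/-- An element of `SL(2,ℝ)` with integer entries lies in `SL2ZinR`. -/
lemma mem_SL2ZinR_of_int (X : SL(2,ℝ)) (h : ∀ i j, IsInt (X.1 i j)) : X ∈ SL2ZinR := by
  choose k hk using h
  have hdet : (Matrix.of ![![k 0 0, k 0 1], ![k 1 0, k 1 1]]).det = 1 := by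
    have h2 : X.1.det = 1 := X.2
    rw [Matrix.det_fin_two] at h2 ⊢
    have : ((k 0 0 * k 1 1 - k 0 1 * k 1 0 : ℤ) : ℝ) = 1 := by
      push_cast
      rw [← hk 0 0, ← hk 0 1, ← hk 1 0, ← hk 1 1]; linarith
    exact_mod_cast this
  refine ⟨⟨_, hdet⟩, ?_⟩
  ext i j
  fin_cases i <;> fin_cases j <;>
    simp [toSL2R, Matrix.SpecialLinearGroup.map_apply_coe (Int.castRingHom ℝ) ⟨_, hdet⟩, ← hk]

/-- Elements of `SL2ZinR` have integer entries. -/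
lemma int_of_mem_SL2ZinR (X : SL(2,ℝ)) (hX : X ∈ SL2ZinR) : ∀ i j, IsInt (X.1 i j) := by
  obtain ⟨B, rfl⟩ := hX
  intro i j
  exact ⟨B.1 i j, by simp [toSL2R]⟩

/-- The key conjugation computation at the level of matrices. -/
lemma conj_coe (P : SL(2,ℝ)) (A : SL(2,ℤ)) :
    ((P⁻¹ * toSL2R A * P : SL(2,ℝ)) : Matrix (Fin 2) (Fin 2) ℝ) =
    !![P.1 1 1, -P.1 0 1; -P.1 1 0, P.1 0 0] *
      !![(A.1 0 0 : ℝ), (A.1 0 1 : ℝ); (A.1 1 0 : ℝ), (A.1 1 1 : ℝ)] * P.1 := by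
  ext i j
  fin_cases i <;> fin_cases j <;>
    simp [Matrix.SpecialLinearGroup.coe_inv, Matrix.adjugate_fin_two, toSL2R, Matrix.mul_apply, Fin.sum_univ_two, Matrix.vecMul, dotProduct]

/-- The integrality condition on `P`. -/
def Cond (P : SL(2,ℝ)) : Prop := ∀ A ∈ Gamma0 8,
  IsIntegerMatrix ((P⁻¹ * toSL2R A * P : SL(2,ℝ)) : Matrix (Fin 2) (Fin 2) ℝ)

lemma isIntegerMatrix_mul {X Y : Matrix (Fin 2) (Fin 2) ℝ}
    (hX : IsIntegerMatrix X) (hY : IsIntegerMatrix Y) : IsIntegerMatrix (X * Y) := by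
  intro i j
  have h0 : IsInt (X i 0 * Y 0 j) := IsInt.mul (hX i 0) (hY 0 j)
  have h1 : IsInt (X i 1 * Y 1 j) := IsInt.mul (hX i 1) (hY 1 j)
  have := h0.add h1
  obtain ⟨k, hk⟩ := this
  exact ⟨k, by rw [Matrix.mul_apply, Fin.sum_univ_two]; exact hk⟩

lemma isIntegerMatrix_toSL2R (M : SL(2,ℤ)) :
    IsIntegerMatrix ((toSL2R M : SL(2,ℝ)) : Matrix (Fin 2) (Fin 2) ℝ) := by
  intro i j
  exact ⟨M.1 i j, by simp [toSL2R]⟩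

/-- The condition is stable under right multiplication by an integer matrix. -/
lemma Cond.mul (P : SL(2,ℝ)) (M : SL(2,ℤ)) (hP : Cond P) : Cond (P * toSL2R M) := by
  intro A hA
  have key : (P * toSL2R M)⁻¹ * toSL2R A * (P * toSL2R M)
      = toSL2R M⁻¹ * (P⁻¹ * toSL2R A * P) * toSL2R M := by
    rw [map_inv]; group
  rw [key]
  have h1 : IsIntegerMatrix (((toSL2R M⁻¹ * (P⁻¹ * toSL2R A * P) : SL(2,ℝ))) :
      Matrix (Fin 2) (Fin 2) ℝ) := by
    rw [Matrix.SpecialLinearGroup.coe_mul]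
    exact isIntegerMatrix_mul (isIntegerMatrix_toSL2R M⁻¹) (hP A hA)
  rw [Matrix.SpecialLinearGroup.coe_mul]
  exact isIntegerMatrix_mul h1 (isIntegerMatrix_toSL2R M)

def A1 : SL(2,ℤ) := ⟨!![1,1;0,1], by norm_num [Matrix.det_fin_two_of]⟩
def A2 : SL(2,ℤ) := ⟨!![1,0;8,1], by norm_num [Matrix.det_fin_two_of]⟩
def A3 : SL(2,ℤ) := ⟨!![9,1;8,1], by norm_num [Matrix.det_fin_two_of]⟩

lemma A1_mem : A1 ∈ Gamma0 8 := by
  rw [Gamma0_mem]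
  simp [A1]
lemma A2_mem : A2 ∈ Gamma0 8 := by
  rw [Gamma0_mem]
  simp [A2]
  decide
lemma A3_mem : A3 ∈ Gamma0 8 := by
  rw [Gamma0_mem]
  simp [A3]
  decide
-- and the a ≡ d mod 8 fact
lemma gamma0_dvd (A : SL(2,ℤ)) (hA : A ∈ Gamma0 8) : (8:ℤ) ∣ A.1 1 0 ∧ (8:ℤ) ∣ (A.1 0 0 - A.1 1 1) := by
  rw [Gamma0_mem] at hA
  have hc : (8:ℤ) ∣ A.1 1 0 := by exact_mod_cast (ZMod.intCast_zmod_eq_zero_iff_dvd _ 8).mp hA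
  refine ⟨hc, ?_⟩
  have hdet : A.1 0 0 * A.1 1 1 - A.1 0 1 * A.1 1 0 = 1 := by
    have := A.2; rw [Matrix.det_fin_two] at this; linarith
  have key : ∀ a d : ZMod 8, a * d = 1 → a - d = 0 := by decide
  have hmul : ((A.1 0 0 : ℤ) : ZMod 8) * ((A.1 1 1 : ℤ) : ZMod 8) = 1 := by
    have : ((A.1 0 0 * A.1 1 1 : ℤ) : ZMod 8) = ((1 + A.1 0 1 * A.1 1 0 : ℤ) : ZMod 8) := by
      exact congrArg _ (by linarith)
    push_cast at this
    rw [hA] at this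
    simpa using this
  have h8 : ((A.1 0 0 - A.1 1 1 : ℤ) : ZMod 8) = 0 := by
    push_cast
    exact key _ _ hmul
  exact_mod_cast (ZMod.intCast_zmod_eq_zero_iff_dvd _ 8).mp h8


lemma cond_entries (P : SL(2,ℝ)) (hP : Cond P) :
    IsInt (P.1 1 0 * P.1 1 1) ∧ IsInt ((P.1 1 1)^2) ∧ IsInt ((P.1 1 0)^2) ∧
    IsInt (8*(P.1 0 0 * P.1 0 1)) ∧ IsInt (8*(P.1 0 1)^2) ∧ IsInt (8*(P.1 0 0)^2) ∧
    IsInt (8*(P.1 0 0 * P.1 1 1)) ∧ IsInt (8*(P.1 0 1 * P.1 1 1)) ∧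
    IsInt (8*(P.1 0 0 * P.1 1 0)) ∧ IsInt (8*(P.1 0 1 * P.1 1 0)) := by
  obtain ⟨p,q,r,s, hPeq, hdet⟩ : ∃ p q r s, P.1 = !![p,q;r,s] ∧ p*s - q*r = 1 := by
    refine ⟨_,_,_,_, Matrix.eta_fin_two P.1, ?_⟩
    have h2 := P.2; rw [Matrix.det_fin_two] at h2; linarith
  have h1 := hP A1 A1_mem
  have h2 := hP A2 A2_mem
  have h3 := hP A3 A3_mem
  rw [conj_coe, hPeq] at h1 h2 h3
  norm_num [A1, A2, A3, Matrix.of_apply, Matrix.cons_val', Matrix.cons_val_zero,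
    Matrix.cons_val_one, Matrix.head_cons, Matrix.head_fin_const, Matrix.empty_val',
    Matrix.cons_val_fin_one] at h1 h2 h3
  have e100 := h1 0 0; have e101 := h1 0 1; have e110 := h1 1 0
  have e200 := h2 0 0; have e201 := h2 0 1; have e210 := h2 1 0
  have e300 := h3 0 0; have e301 := h3 0 1; have e310 := h3 1 0; have e311 := h3 1 1
  simp only [Matrix.of_apply, Matrix.cons_val', Matrix.cons_val_zero, Matrix.cons_val_one,
    Matrix.head_cons, Matrix.head_fin_const, Matrix.empty_val', Matrix.cons_val_fin_one]
    at e100 e101 e110 e200 e201 e210 e300 e301 e310 e311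
  obtain ⟨k1, hk1⟩ := e100
  obtain ⟨k2, hk2⟩ := e101
  obtain ⟨k3, hk3⟩ := e110
  obtain ⟨k4, hk4⟩ := e200
  obtain ⟨k5, hk5⟩ := e201
  obtain ⟨k6, hk6⟩ := e210
  obtain ⟨k7, hk7⟩ := e300
  obtain ⟨k8, hk8⟩ := e301
  obtain ⟨k9, hk9⟩ := e310
  obtain ⟨k10, hk10⟩ := e311
  rw [hPeq]
  simp only [Matrix.of_apply, Matrix.cons_val', Matrix.cons_val_zero, Matrix.cons_val_one,
    Matrix.head_cons, Matrix.head_fin_const, Matrix.empty_val', Matrix.cons_val_fin_one]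
  refine ⟨⟨k1 - 1, by push_cast; linear_combination hk1 - hdet⟩,
    ⟨k2, by push_cast; linear_combination hk2⟩,
    ⟨-k3, by push_cast; linear_combination -hk3⟩,
    ⟨1 - k4, by push_cast; linear_combination -hk4 + hdet⟩,
    ⟨-k5, by push_cast; linear_combination -hk5⟩,
    ⟨k6, by push_cast; linear_combination hk6⟩,
    ⟨k7 - k4 - k1 + 1, by push_cast; linear_combination hk7 - hk4 - hk1 + hdet⟩,
    ⟨k8 - k5 - k2, by push_cast; linear_combination hk8 - hk5 - hk2⟩,
    ⟨k6 + k3 - k9, by push_cast; linear_combination hk6 + hk3 - hk9⟩,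
    ⟨3 - k4 - k1 - k10, by push_cast; linear_combination -hk1 - hk4 - hk10 + 3*hdet⟩⟩

/-- The triangular representative `(1/t, w; 0, t)`. -/
noncomputable def rep (t w : ℝ) (ht : t ≠ 0) : SL(2,ℝ) :=
  ⟨!![t⁻¹, w; 0, t], by simp [Matrix.det_fin_two_of]; field_simp⟩

lemma sqrt_ne_zero'' (e : ℤ) (he : 0 < e) : Real.sqrt e ≠ 0 :=
  ne_of_gt (Real.sqrt_pos.mpr (by exact_mod_cast he))

/-- The representative attached to `(e, x)`. -/
noncomputable def Rep (e x : ℤ) (he : 0 < e) : SL(2,ℝ) :=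
  rep (Real.sqrt e) ((x : ℝ) * Real.sqrt e / 8) (sqrt_ne_zero'' e he)

/-- Conjugation by a triangular representative, explicitly. -/
lemma rep_conj (t x e : ℝ) (ht : t ≠ 0) (he : t^2 = e) (a b c d : ℝ) :
    !![t, -(x*t/8); -0, t⁻¹] * !![a, b; c, d] * !![t⁻¹, x*t/8; 0, t]
    = !![a - x*c/8, (a-d)*x*e/8 + b*e - c*x^2*e/64; c/e, c*x/8 + d] := by
  subst he
  ext i j
  fin_cases i <;> fin_cases j <;>
    simp [Matrix.mul_apply, Fin.sum_univ_two] <;> field_simp <;> first | ring1 | exact Or.inl (by ring)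

lemma Rep_mem_goodCosets (e x : ℤ) (he : 0 < e) (hdvd : e ∣ 8) (hx : (8:ℤ) ∣ x^2 * e) :
    (QuotientGroup.mk (Rep e x he) : SL(2,ℝ) ⧸ SL2ZinR) ∈ goodCosets (Gamma0 8) := by
  refine ⟨Rep e x he, rfl, ?_⟩
  intro A hA
  obtain ⟨hc, had⟩ := gamma0_dvd A hA
  obtain ⟨c8, hc8⟩ := hc
  obtain ⟨m, hm⟩ := had
  obtain ⟨f, hf⟩ := hdvd
  obtain ⟨y, hy⟩ := hx
  set t : ℝ := Real.sqrt e with htdef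
  have ht : t ≠ 0 := sqrt_ne_zero'' e he
  have ht2 : t^2 = (e:ℝ) := Real.sq_sqrt (by exact_mod_cast he.le)
  have he0 : (e:ℝ) ≠ 0 := by exact_mod_cast he.ne'
  rw [conj_coe]
  have hrep : (Rep e x he).1 = !![t⁻¹, (x:ℝ)*t/8; 0, t] := rfl
  rw [hrep]
  simp only [Matrix.of_apply, Matrix.cons_val', Matrix.cons_val_zero, Matrix.cons_val_one,
    Matrix.head_cons, Matrix.head_fin_const, Matrix.empty_val', Matrix.cons_val_fin_one]
  rw [rep_conj t (x:ℝ) (e:ℝ) ht ht2]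
  -- cast the entry data
  have hcR : (A.1 1 0 : ℝ) = 8 * (c8 : ℝ) := by exact_mod_cast hc8
  have hmR : (A.1 0 0 : ℝ) - (A.1 1 1 : ℝ) = 8 * (m : ℝ) := by exact_mod_cast hm
  have hfR : (8:ℝ) = (e:ℝ) * (f:ℝ) := by exact_mod_cast hf
  have hyR : (x:ℝ)^2 * (e:ℝ) = 8 * (y:ℝ) := by exact_mod_cast hy
  intro i j
  fin_cases i <;> fin_cases j <;>
    simp only [Fin.zero_eta, Fin.mk_one, Matrix.of_apply, Matrix.cons_val', Matrix.cons_val_zero,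
      Matrix.cons_val_one, Matrix.head_cons, Matrix.head_fin_const, Matrix.empty_val',
      Matrix.cons_val_fin_one]
  · refine ⟨A.1 0 0 - x * c8, ?_⟩
    push_cast
    linear_combination (-(x:ℝ)/8) * hcR
  · refine ⟨m * x * e + A.1 0 1 * e - c8 * y, ?_⟩
    push_cast
    linear_combination ((x:ℝ)*(e:ℝ)/8)*hmR - ((x:ℝ)^2*(e:ℝ)/64)*hcR - ((c8:ℝ)/8)*hyR
  · refine ⟨c8 * f, ?_⟩
    push_cast
    rw [div_eq_iff he0]
    linear_combination hcR + (c8:ℝ) * hfR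
  · refine ⟨c8 * x + A.1 1 1, ?_⟩
    push_cast
    linear_combination ((x:ℝ)/8) * hcR

/-- Reduce the bottom row to `(0, t)` with `t > 0` by a right `SL₂(ℤ)` move. -/
lemma reduce (r s : ℝ) (hne : ¬(r = 0 ∧ s = 0)) (hr2 : IsInt (r^2)) (hrs : IsInt (r*s)) :
    ∃ a b c d : ℤ, a*d - b*c = 1 ∧ r*a + s*c = 0 ∧ 0 < r*b + s*d := by
  by_cases hr : r = 0
  · have hs : s ≠ 0 := by tauto
    rcases hs.lt_or_gt with h|h
    · exact ⟨-1, 0, 0, -1, by ring, by simp [hr], by simp [hr]; linarith⟩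
    · exact ⟨1, 0, 0, 1, by ring, by simp [hr], by simp [hr]; linarith⟩
  · obtain ⟨kr, hkr⟩ := hr2
    obtain ⟨krs, hkrs⟩ := hrs
    have hkrpos : 0 < kr := by
      have h0 : (0:ℝ) < (kr:ℝ) := by rw [← hkr]; positivity
      exact_mod_cast h0
    set g : ℕ := Int.gcd kr krs with hg
    have hgpos : 0 < g := Int.gcd_pos_of_ne_zero_left krs hkrpos.ne'
    set c0 : ℤ := kr / g with hc0def
    set d0 : ℤ := krs / g with hd0def
    have hc0 : kr = g * c0 := (Int.mul_ediv_cancel' (Int.gcd_dvd_left _ _)).symm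
    have hd0 : krs = g * d0 := (Int.mul_ediv_cancel' (Int.gcd_dvd_right _ _)).symm
    have hgZ : (0:ℤ) < (g:ℤ) := by exact_mod_cast hgpos
    have hc0pos : 0 < c0 := by nlinarith
    have hcop : IsCoprime c0 d0 :=
      Int.isCoprime_iff_gcd_eq_one.mpr (Int.gcd_div_gcd_div_gcd (by exact_mod_cast hgpos))
    obtain ⟨u, v, huv⟩ := hcop
    have hcross : krs * c0 = d0 * kr := by rw [hc0, hd0]; ring
    have hsc : s * (c0:ℝ) = (d0:ℝ) * r := by
      have h1 : r * (s * (c0:ℝ) - (d0:ℝ) * r) = 0 := by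
        have h2 : (r*s) * (c0:ℝ) - (d0:ℝ) * r^2 = (krs:ℝ)*(c0:ℝ) - (d0:ℝ)*(kr:ℝ) := by
          rw [hkrs, hkr]
        have h3 : (krs:ℝ)*(c0:ℝ) - (d0:ℝ)*(kr:ℝ) = 0 := by
          have := congrArg (fun z : ℤ => (z:ℝ)) hcross
          push_cast at this
          linarith
        nlinarith [h2, h3]
      rcases mul_eq_zero.mp h1 with h|h
      · exact absurd h hr
      · linarith
    have hc0R : (0:ℝ) < (c0:ℝ) := by exact_mod_cast hc0pos
    have huvR : (u:ℝ) * c0 + (v:ℝ) * d0 = 1 := by exact_mod_cast huv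
    rcases lt_or_gt_of_ne hr with hrneg|hrpos
    · refine ⟨-d0, -u, c0, -v, ?_, ?_, ?_⟩
      · linear_combination huv
      · push_cast; linarith [hsc]
      · have hX : (c0:ℝ) * (r*(-(u:ℝ)) + s*(-(v:ℝ))) = -r := by
          linear_combination (-(v:ℝ)) * hsc + (-r) * huvR
        push_cast
        nlinarith [hX]
    · refine ⟨d0, u, -c0, v, ?_, ?_, ?_⟩
      · linear_combination huv
      · push_cast; linarith [hsc]
      · have hX : (c0:ℝ) * (r*(u:ℝ) + s*(v:ℝ)) = r := by
          linear_combination (v:ℝ) * hsc + r * huvR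
        push_cast
        nlinarith [hX]

/-- Shifting `x` by a multiple of `8/e` does not change the coset. -/
lemma Rep_shift (e x x0 : ℤ) (he : 0 < e) (h : (8:ℤ) ∣ (x - x0) * e) :
    (QuotientGroup.mk (Rep e x he) : SL(2,ℝ) ⧸ SL2ZinR) = QuotientGroup.mk (Rep e x0 he) := by
  obtain ⟨n, hn⟩ := h
  set t : ℝ := Real.sqrt e with htdef
  have ht : t ≠ 0 := sqrt_ne_zero'' e he
  have ht2 : t^2 = (e:ℝ) := Real.sq_sqrt (by exact_mod_cast he.le)
  have hnR : ((x:ℝ) - (x0:ℝ)) * (e:ℝ) = 8 * (n:ℝ) := by exact_mod_cast hn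
  have key : Rep e x he = Rep e x0 he *
      toSL2R ⟨!![1, n; 0, 1], by norm_num [Matrix.det_fin_two_of]⟩ := by
    apply Subtype.ext
    rw [Matrix.SpecialLinearGroup.coe_mul]
    have h1 : (Rep e x he).1 = !![t⁻¹, (x:ℝ)*t/8; 0, t] := rfl
    have h2 : (Rep e x0 he).1 = !![t⁻¹, (x0:ℝ)*t/8; 0, t] := rfl
    have h3 : ((toSL2R ⟨!![1, n; 0, 1], by norm_num [Matrix.det_fin_two_of]⟩ : SL(2,ℝ)) :
        Matrix (Fin 2) (Fin 2) ℝ) = !![(1:ℝ), (n:ℝ); 0, 1] := by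
      ext i j
      fin_cases i <;> fin_cases j <;> simp [toSL2R,
        Matrix.SpecialLinearGroup.map_apply_coe (Int.castRingHom ℝ) ⟨!![1, n; 0, 1], _⟩]
    rw [h1, h2, h3]
    ext i j
    fin_cases i <;> fin_cases j <;>
      simp [Matrix.mul_apply, Fin.sum_univ_two]
    · field_simp
      linear_combination ((x:ℝ) - (x0:ℝ)) * ht2 + hnR
  rw [key]
  exact QuotientGroup.mk_mul_of_mem _ ⟨_, rfl⟩

/-- Distinct parameters give distinct cosets. -/
lemma Rep_inj (e x e' x' : ℤ) (he : 0 < e) (he' : 0 < e')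
    (h : (QuotientGroup.mk (Rep e x he) : SL(2,ℝ) ⧸ SL2ZinR) = QuotientGroup.mk (Rep e' x' he')) :
    e = e' ∧ (8:ℤ) ∣ (x' - x) * e := by
  rw [QuotientGroup.eq] at h
  have hint := int_of_mem_SL2ZinR _ h
  set t : ℝ := Real.sqrt e with htdef
  set t' : ℝ := Real.sqrt e' with htdef'
  have ht : t ≠ 0 := sqrt_ne_zero'' e he
  have ht' : t' ≠ 0 := sqrt_ne_zero'' e' he'
  have htpos : 0 < t := Real.sqrt_pos.mpr (by exact_mod_cast he)
  have htpos' : 0 < t' := Real.sqrt_pos.mpr (by exact_mod_cast he')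
  have ht2 : t^2 = (e:ℝ) := Real.sq_sqrt (by exact_mod_cast he.le)
  have ht2' : t'^2 = (e':ℝ) := Real.sq_sqrt (by exact_mod_cast he'.le)
  have key : ((Rep e x he)⁻¹ * Rep e' x' he').1 =
      !![t * t'⁻¹, t*((x':ℝ)*t'/8) - ((x:ℝ)*t/8)*t'; 0, t⁻¹ * t'] := by
    have h1 : (Rep e x he).1 = !![t⁻¹, (x:ℝ)*t/8; 0, t] := rfl
    have h2 : (Rep e' x' he').1 = !![t'⁻¹, (x':ℝ)*t'/8; 0, t'] := rfl
    ext i j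
    fin_cases i <;> fin_cases j <;>
      simp [Matrix.SpecialLinearGroup.coe_inv, Matrix.adjugate_fin_two, h1, h2, Matrix.mul_apply,
        Fin.sum_univ_two, Matrix.vecMul, dotProduct] <;> ring
  rw [key] at hint
  obtain ⟨k1, hk1⟩ := hint 0 0
  obtain ⟨k2, hk2⟩ := hint 1 1
  obtain ⟨k3, hk3⟩ := hint 0 1
  simp only [Matrix.of_apply, Matrix.cons_val', Matrix.cons_val_zero, Matrix.cons_val_one,
    Matrix.head_cons, Matrix.head_fin_const, Matrix.empty_val', Matrix.cons_val_fin_one]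
    at hk1 hk2 hk3
  have hk1pos : (0:ℝ) < k1 := by rw [← hk1]; positivity
  have hk12 : (k1:ℝ) * (k2:ℝ) = 1 := by
    rw [← hk1, ← hk2]; field_simp
  have hk12Z : k1 * k2 = 1 := by exact_mod_cast hk12
  have hk1Z : 0 < k1 := by exact_mod_cast hk1pos
  have hk1one : k1 = 1 := by
    rcases Int.isUnit_iff.mp (IsUnit.of_mul_eq_one k2 hk12Z) with h1|h1
    · exact h1
    · omega
  have htt : t = t' := by
    have : t * t'⁻¹ = 1 := by rw [hk1, hk1one]; norm_num
    field_simp at this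
    exact this
  have hee : e = e' := by
    have : ((e:ℝ)) = ((e':ℝ)) := by rw [← ht2, ← ht2', htt]
    exact_mod_cast this
  refine ⟨hee, ⟨k3, ?_⟩⟩
  have hr : ((x':ℝ) - (x:ℝ)) * (e:ℝ) = 8 * (k3:ℝ) := by
    rw [← ht2]
    have h4 : t*((x':ℝ)*t'/8) - ((x:ℝ)*t/8)*t' = ((x':ℝ) - (x:ℝ)) * t^2 / 8 := by
      rw [← htt]; ring
    rw [h4] at hk3
    linarith [hk3]
  exact_mod_cast hr

lemma sq_mod_8 (x : ℤ) (h : (8:ℤ) ∣ x^2) : (8:ℤ) ∣ x ∨ (8:ℤ) ∣ (x - 4) := by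
  have h8 : ((x:ZMod 8))^2 = 0 := by
    have h1 := (ZMod.intCast_zmod_eq_zero_iff_dvd (x^2) 8).mpr h
    push_cast at h1
    exact h1
  have key : ∀ z : ZMod 8, z^2 = 0 → z = 0 ∨ z - 4 = 0 := by decide
  rcases key _ h8 with h1|h1
  · exact Or.inl (by exact_mod_cast (ZMod.intCast_zmod_eq_zero_iff_dvd x 8).mp h1)
  · refine Or.inr ?_
    have h2 : ((x - 4 : ℤ) : ZMod 8) = 0 := by push_cast; exact h1
    exact_mod_cast (ZMod.intCast_zmod_eq_zero_iff_dvd (x-4) 8).mp h2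

lemma sq_mod_4 (x : ℤ) (h : (4:ℤ) ∣ x^2) : (4:ℤ) ∣ x ∨ (4:ℤ) ∣ (x - 2) := by
  have h8 : ((x:ZMod 4))^2 = 0 := by
    have h1 := (ZMod.intCast_zmod_eq_zero_iff_dvd (x^2) 4).mpr h
    push_cast at h1
    exact h1
  have key : ∀ z : ZMod 4, z^2 = 0 → z = 0 ∨ z - 2 = 0 := by decide
  rcases key _ h8 with h1|h1
  · exact Or.inl (by exact_mod_cast (ZMod.intCast_zmod_eq_zero_iff_dvd x 4).mp h1)
  · refine Or.inr ?_
    have h2 : ((x - 2 : ℤ) : ZMod 4) = 0 := by push_cast; exact h1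
    exact_mod_cast (ZMod.intCast_zmod_eq_zero_iff_dvd (x-2) 4).mp h2

lemma sq_mod_2 (x : ℤ) (h : (2:ℤ) ∣ x^2) : (2:ℤ) ∣ x := by
  have h8 : ((x:ZMod 2))^2 = 0 := by
    have h1 := (ZMod.intCast_zmod_eq_zero_iff_dvd (x^2) 2).mpr h
    push_cast at h1
    exact h1
  have key : ∀ z : ZMod 2, z^2 = 0 → z = 0 := by decide
  exact_mod_cast (ZMod.intCast_zmod_eq_zero_iff_dvd x 2).mp (key _ h8)

lemma good_eq : goodCosets (Gamma0 8) =
    ({QuotientGroup.mk (Rep 1 0 (by norm_num)), QuotientGroup.mk (Rep 1 4 (by norm_num)),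
      QuotientGroup.mk (Rep 2 0 (by norm_num)), QuotientGroup.mk (Rep 2 2 (by norm_num)),
      QuotientGroup.mk (Rep 4 0 (by norm_num)), QuotientGroup.mk (Rep 8 0 (by norm_num))} :
      Set (SL(2,ℝ) ⧸ SL2ZinR)) := by
  apply Set.Subset.antisymm
  · rintro z ⟨P, rfl, hP⟩
    have hPc : Cond P := hP
    obtain ⟨hrs, hs2, hr2, -, -, -, -, -, -, -⟩ := cond_entries P hPc
    have hdetP : P.1 0 0 * P.1 1 1 - P.1 0 1 * P.1 1 0 = 1 := by
      have h2 := P.2; rw [Matrix.det_fin_two] at h2; linarith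
    have hne : ¬(P.1 1 0 = 0 ∧ P.1 1 1 = 0) := by
      rintro ⟨h1, h2⟩; rw [h1, h2] at hdetP; norm_num at hdetP
    obtain ⟨a, b, c, d, hdetM, h0, hposv⟩ := reduce (P.1 1 0) (P.1 1 1) hne hr2 hrs
    set M : SL(2,ℤ) := ⟨!![a,b;c,d], by rw [Matrix.det_fin_two_of]; linarith⟩ with hM
    set Q := P * toSL2R M with hQ
    have hQc : Cond Q := Cond.mul P M hPc
    have hQcoe : Q.1 = P.1 * (M.1.map (Int.cast : ℤ → ℝ)) := rfl
    have hMcoe : M.1 = !![a,b;c,d] := rfl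
    have h10 : Q.1 1 0 = 0 := by
      have hh : Q.1 1 0 = P.1 1 0 * a + P.1 1 1 * c := by
        rw [hQcoe, hMcoe]; simp [Matrix.mul_apply, Fin.sum_univ_two]
      rw [hh]; exact h0
    have h11 : Q.1 1 1 = P.1 1 0 * b + P.1 1 1 * d := by
      rw [hQcoe, hMcoe]; simp [Matrix.mul_apply, Fin.sum_univ_two]
    set t : ℝ := Q.1 1 1 with htd
    have htpos : 0 < t := by rw [h11]; exact hposv
    have ht : t ≠ 0 := htpos.ne'
    have hdetQ : Q.1 0 0 * t - Q.1 0 1 * Q.1 1 0 = 1 := by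
      have h2 := Q.2; rw [Matrix.det_fin_two] at h2; linarith
    have hp : Q.1 0 0 = t⁻¹ := by
      rw [h10] at hdetQ
      rw [inv_eq_one_div, eq_div_iff ht]
      linarith
    obtain ⟨-, hs2Q, -, hpqQ, hq2Q, hp2Q, -, -, -, -⟩ := cond_entries Q hQc
    rw [← htd] at hs2Q
    rw [hp] at hpqQ hp2Q
    obtain ⟨e, he⟩ := hs2Q
    have hepos : (0:ℤ) < e := by
      have h3 : (0:ℝ) < (e:ℝ) := by rw [← he]; positivity
      exact_mod_cast h3
    obtain ⟨f, hf⟩ := hp2Q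
    have hef : e * f = 8 := by
      have h3 : ((e:ℝ)) * ((f:ℝ)) = 8 := by
        rw [← he, ← hf]; field_simp
      exact_mod_cast h3
    obtain ⟨x, hx⟩ := hpqQ
    have h8q : 8 * Q.1 0 1 = (x:ℝ) * t := by
      have h4 : 8 * (t⁻¹ * Q.1 0 1) * t = (x:ℝ) * t := by rw [hx]
      field_simp at h4
      linarith
    have hq01 : Q.1 0 1 = (x:ℝ) * t / 8 := by
      rw [eq_div_iff (by norm_num : (8:ℝ) ≠ 0)]; linarith
    obtain ⟨y, hy⟩ := hq2Q
    have hxe : x^2 * e = 8 * y := by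
      have h5 : ((x:ℝ))^2 * (e:ℝ) = 8 * (y:ℝ) := by
        linear_combination (-(x:ℝ)^2) * he + (-(8*Q.1 0 1 + (x:ℝ)*t)) * h8q + 8 * hy
      exact_mod_cast h5
    have hdvd : e ∣ 8 := ⟨f, hef.symm⟩
    have htsqrt : Real.sqrt ((e:ℤ):ℝ) = t := by
      rw [← he]; exact Real.sqrt_sq htpos.le
    have hQrep : Q = Rep e x hepos := by
      apply Subtype.ext
      have hR : (Rep e x hepos).1 = !![(Real.sqrt ((e:ℤ):ℝ))⁻¹,
          (x:ℝ) * Real.sqrt ((e:ℤ):ℝ)/8; 0, Real.sqrt ((e:ℤ):ℝ)] := rfl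
      rw [hR, htsqrt, Matrix.eta_fin_two Q.1, hp, hq01, h10]
    have hmkQ : (QuotientGroup.mk P : SL(2,ℝ) ⧸ SL2ZinR) = QuotientGroup.mk (Rep e x hepos) := by
      rw [← hQrep, hQ]
      exact (QuotientGroup.mk_mul_of_mem P (show toSL2R M ∈ SL2ZinR from ⟨M, rfl⟩)).symm
    rw [hmkQ]
    simp only [Set.mem_insert_iff, Set.mem_singleton_iff]
    have he1 : 1 ≤ e := hepos
    have he8 : e ≤ 8 := Int.le_of_dvd (by norm_num) hdvd
    interval_cases e
    · -- e = 1
      rcases sq_mod_8 x ⟨y, by linarith [hxe]⟩ with h6|h6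
      · exact Or.inl (Rep_shift 1 x 0 (by norm_num) (by simpa using h6))
      · exact Or.inr (Or.inl (Rep_shift 1 x 4 (by norm_num) (by simpa using h6)))
    · -- e = 2
      rcases sq_mod_4 x ⟨y, by linarith [hxe]⟩ with h6|h6
      · refine Or.inr (Or.inr (Or.inl (Rep_shift 2 x 0 (by norm_num) ?_)))
        obtain ⟨k, hk⟩ := h6; exact ⟨k, by linarith [hk]⟩
      · refine Or.inr (Or.inr (Or.inr (Or.inl (Rep_shift 2 x 2 (by norm_num) ?_))))
        obtain ⟨k, hk⟩ := h6; exact ⟨k, by linarith [hk]⟩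
    · omega
    · -- e = 4
      have h6 := sq_mod_2 x ⟨y, by linarith [hxe]⟩
      refine Or.inr (Or.inr (Or.inr (Or.inr (Or.inl (Rep_shift 4 x 0 (by norm_num) ?_)))))
      obtain ⟨k, hk⟩ := h6; exact ⟨k, by linarith [hk]⟩
    · omega
    · omega
    · omega
    · -- e = 8
      exact Or.inr (Or.inr (Or.inr (Or.inr (Or.inr
        (Rep_shift 8 x 0 (by norm_num) ⟨x, by ring⟩)))))
  · intro z hz
    simp only [Set.mem_insert_iff, Set.mem_singleton_iff] at hz
    rcases hz with rfl|rfl|rfl|rfl|rfl|rfl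
    · exact Rep_mem_goodCosets 1 0 (by norm_num) (by norm_num) (by norm_num)
    · exact Rep_mem_goodCosets 1 4 (by norm_num) (by norm_num) (by norm_num)
    · exact Rep_mem_goodCosets 2 0 (by norm_num) (by norm_num) (by norm_num)
    · exact Rep_mem_goodCosets 2 2 (by norm_num) (by norm_num) (by norm_num)
    · exact Rep_mem_goodCosets 4 0 (by norm_num) (by norm_num) (by norm_num)
    · exact Rep_mem_goodCosets 8 0 (by norm_num) (by norm_num) (by norm_num)

lemma Rep_ne (e x e' x' : ℤ) (he : 0 < e) (he' : 0 < e')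
    (hn : ¬(e = e' ∧ (8:ℤ) ∣ (x' - x) * e)) :
    (QuotientGroup.mk (Rep e x he) : SL(2,ℝ) ⧸ SL2ZinR) ≠ QuotientGroup.mk (Rep e' x' he') :=
  fun hc => hn (Rep_inj e x e' x' he he' hc)

end Stmt18Aux

open Stmt18Aux

/-- `N(Γ₀(8)) = 6`. -/
theorem stmt_18 : (goodCosets (Gamma0 8)).ncard = 6 := by
  rw [good_eq]
  have d12 := Rep_ne 1 0 1 4 (by norm_num) (by norm_num) (by omega)
  have d13 := Rep_ne 1 0 2 0 (by norm_num) (by norm_num) (by omega)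
  have d14 := Rep_ne 1 0 2 2 (by norm_num) (by norm_num) (by omega)
  have d15 := Rep_ne 1 0 4 0 (by norm_num) (by norm_num) (by omega)
  have d16 := Rep_ne 1 0 8 0 (by norm_num) (by norm_num) (by omega)
  have d23 := Rep_ne 1 4 2 0 (by norm_num) (by norm_num) (by omega)
  have d24 := Rep_ne 1 4 2 2 (by norm_num) (by norm_num) (by omega)
  have d25 := Rep_ne 1 4 4 0 (by norm_num) (by norm_num) (by omega)
  have d26 := Rep_ne 1 4 8 0 (by norm_num) (by norm_num) (by omega)
  have d34 := Rep_ne 2 0 2 2 (by norm_num) (by norm_num) (by omega)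
  have d35 := Rep_ne 2 0 4 0 (by norm_num) (by norm_num) (by omega)
  have d36 := Rep_ne 2 0 8 0 (by norm_num) (by norm_num) (by omega)
  have d45 := Rep_ne 2 2 4 0 (by norm_num) (by norm_num) (by omega)
  have d46 := Rep_ne 2 2 8 0 (by norm_num) (by norm_num) (by omega)
  have d56 := Rep_ne 4 0 8 0 (by norm_num) (by norm_num) (by omega)
  have h1 : (QuotientGroup.mk (Rep 1 0 (by norm_num)) : SL(2,ℝ) ⧸ SL2ZinR) ∉
      ({QuotientGroup.mk (Rep 1 4 (by norm_num)), QuotientGroup.mk (Rep 2 0 (by norm_num)),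
        QuotientGroup.mk (Rep 2 2 (by norm_num)), QuotientGroup.mk (Rep 4 0 (by norm_num)),
        QuotientGroup.mk (Rep 8 0 (by norm_num))} : Set (SL(2,ℝ) ⧸ SL2ZinR)) := by
    simp only [Set.mem_insert_iff, Set.mem_singleton_iff]
    push_neg
    exact ⟨d12, d13, d14, d15, d16⟩
  have h2 : (QuotientGroup.mk (Rep 1 4 (by norm_num)) : SL(2,ℝ) ⧸ SL2ZinR) ∉
      ({QuotientGroup.mk (Rep 2 0 (by norm_num)),
        QuotientGroup.mk (Rep 2 2 (by norm_num)), QuotientGroup.mk (Rep 4 0 (by norm_num)),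
        QuotientGroup.mk (Rep 8 0 (by norm_num))} : Set (SL(2,ℝ) ⧸ SL2ZinR)) := by
    simp only [Set.mem_insert_iff, Set.mem_singleton_iff]
    push_neg
    exact ⟨d23, d24, d25, d26⟩
  have h3 : (QuotientGroup.mk (Rep 2 0 (by norm_num)) : SL(2,ℝ) ⧸ SL2ZinR) ∉
      ({QuotientGroup.mk (Rep 2 2 (by norm_num)), QuotientGroup.mk (Rep 4 0 (by norm_num)),
        QuotientGroup.mk (Rep 8 0 (by norm_num))} : Set (SL(2,ℝ) ⧸ SL2ZinR)) := by
    simp only [Set.mem_insert_iff, Set.mem_singleton_iff]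
    push_neg
    exact ⟨d34, d35, d36⟩
  have h4 : (QuotientGroup.mk (Rep 2 2 (by norm_num)) : SL(2,ℝ) ⧸ SL2ZinR) ∉
      ({QuotientGroup.mk (Rep 4 0 (by norm_num)),
        QuotientGroup.mk (Rep 8 0 (by norm_num))} : Set (SL(2,ℝ) ⧸ SL2ZinR)) := by
    simp only [Set.mem_insert_iff, Set.mem_singleton_iff]
    push_neg
    exact ⟨d45, d46⟩
  have h5 : (QuotientGroup.mk (Rep 4 0 (by norm_num)) : SL(2,ℝ) ⧸ SL2ZinR) ∉
      ({QuotientGroup.mk (Rep 8 0 (by norm_num))} : Set (SL(2,ℝ) ⧸ SL2ZinR)) := by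
    simp only [Set.mem_singleton_iff]
    exact d56
  rw [Set.ncard_insert_of_notMem h1, Set.ncard_insert_of_notMem h2,
    Set.ncard_insert_of_notMem h3, Set.ncard_insert_of_notMem h4,
    Set.ncard_insert_of_notMem h5, Set.ncard_singleton]
end
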